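/- Suppose |r(λ_n)| > 0, the n×n matrix X_n* B Y_0 is invertible, and additionally |r(λ_j)| > |r(λ_{n+1})| for some fixed j with 1 ≤ j ≤ n. Then the B-norm distance of the eigenvector x_j to the column span of Z_k tends to 0 as k → ∞, i.e. min over z in span(Z_k) of ‖x_j − z‖_B → 0. -/

import Mathlib

open Matrix ComplexOrder

/-- **FEAST convergence** (Güttel–Polizzi–Tang–Viaud, Theorem 2.2, final statement).
If `|r(λ_n)| > 0`, `X_nᴴ B Y_0` is invertible, and `|r(λ_j)| > |r(λ_{n+1})|` for a
fixed `j ≤ n`, then the `B`-norm distance of the eigenvector `x_j` to the column span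
of `Z_k` tends to `0` as `k → ∞`. -/
theorem feast_subspace_iteration_convergence
    (N n : ℕ) (hn1 : 1 ≤ n) (hnN : n < N)
    (A B X : Matrix (Fin N) (Fin N) ℂ)
    (hB : B.PosDef)
    (lam : Fin N → ℝ)
    (hX : Xᴴ * B * X = 1)
    (hM : B⁻¹ * A = X * Matrix.diagonal (fun i => (lam i : ℂ)) * X⁻¹)
    (r : ℝ → ℂ)
    (hord : ∀ i j : Fin N, i ≤ j → ‖r (lam j)‖ ≤ ‖r (lam i)‖)
    (rM : Matrix (Fin N) (Fin N) ℂ)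
    (hrM : rM = X * Matrix.diagonal (fun i => r (lam i)) * X⁻¹)
    (Y Z : ℕ → Matrix (Fin N) (Fin n) ℂ)
    (W : ℕ → Matrix (Fin n) (Fin n) ℂ)
    (hZ : ∀ k, Z (k + 1) = rM * Y k)
    (hW : ∀ k, (W (k + 1))ᴴ * ((Z (k + 1))ᴴ * B * Z (k + 1)) * W (k + 1) = 1)
    (hY : ∀ k, Y (k + 1) = Z (k + 1) * W (k + 1))
    (Xn : Matrix (Fin N) (Fin n) ℂ)
    (hXn : Xn = X.submatrix id (Fin.castLE hnN.le))
    (hrn : 0 < ‖r (lam ⟨n - 1, by omega⟩)‖)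
    (hY0 : IsUnit (Xnᴴ * B * Y 0))
    (Bnorm : (Fin N → ℂ) → ℝ)
    (hBnorm : ∀ w, Bnorm w = Real.sqrt ((star w ⬝ᵥ B.mulVec w).re))
    (j : Fin N) (hj : (j : ℕ) < n)
    (hsep : ‖r (lam ⟨n, hnN⟩)‖ < ‖r (lam j)‖) :
    Filter.Tendsto
      (fun k : ℕ =>
        sInf {t : ℝ | ∃ z ∈ LinearMap.range (Z k).mulVecLin,
          t = Bnorm ((fun i => X i j) - z)})
      Filter.atTop (nhds 0) := by
  classical
  -- X is invertible with inverse Xᴴ B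
  have hXl : (Xᴴ * B) * X = 1 := by rw [mul_assoc]; rw [mul_assoc] at hX; exact hX
  have hXdet : IsUnit X.det := Matrix.isUnit_det_of_left_inverse hXl
  have hXinv : X⁻¹ = Xᴴ * B := Matrix.inv_eq_left_inv hXl
  have hXX : X * (Xᴴ * B) = 1 := by rw [← hXinv]; exact Matrix.mul_nonsing_inv X hXdet
  set D := Matrix.diagonal (fun i => r (lam i)) with hD
  have hpow : ∀ m : ℕ, rM ^ m * X = X * D ^ m := by
    intro m
    induction m with
    | zero => simp
    | succ k ih =>
      have hstep : rM * X = X * D := by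
        rw [hrM, hXinv, mul_assoc (X * D), hXl, mul_one]
      rw [pow_succ, pow_succ, mul_assoc, hstep, ← mul_assoc, ih, mul_assoc]
  have hrMk : ∀ m : ℕ, rM ^ m = X * D ^ m * (Xᴴ * B) := by
    intro m
    calc rM ^ m = rM ^ m * (X * (Xᴴ * B)) := by rw [hXX, mul_one]
    _ = (rM ^ m * X) * (Xᴴ * B) := by rw [mul_assoc]
    _ = X * D ^ m * (Xᴴ * B) := by rw [hpow m]
  -- eigencoefficients of Y 0
  set C : Matrix (Fin N) (Fin n) ℂ := Xᴴ * B * Y 0 with hC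
  have hY0C : Y 0 = X * C := by
    rw [hC, ← Matrix.mul_assoc, hXX, Matrix.one_mul]
  set C1 : Matrix (Fin n) (Fin n) ℂ := C.submatrix (Fin.castLE hnN.le) id with hC1
  have hC1eq : Xnᴴ * B * Y 0 = C1 := by
    subst hXn
    ext i l
    simp [hC1, hC, Matrix.mul_apply, Matrix.conjTranspose_apply, Matrix.submatrix_apply]
  have hC1u : IsUnit C1.det := by
    rw [← hC1eq] at *
    exact (Matrix.isUnit_iff_isUnit_det _).mp hY0
  have hC1inv : C1 * C1⁻¹ = 1 := Matrix.mul_nonsing_inv C1 hC1u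
  set G : Matrix (Fin N) (Fin n) ℂ := C * C1⁻¹ with hG
  set j' : Fin n := ⟨(j : ℕ), hj⟩ with hj'
  -- top block of G is the identity
  have hGtop : ∀ i : Fin N, (h : (i : ℕ) < n) → G i j' = if i = j then 1 else 0 := by
    intro i h
    have hCrow : ∀ l : Fin n, C i l = C1 ⟨(i : ℕ), h⟩ l := by
      intro l
      rw [hC1]
      congr 1
    have : G i j' = (C1 * C1⁻¹) ⟨(i : ℕ), h⟩ j' := by
      rw [hG, Matrix.mul_apply, Matrix.mul_apply]
      exact Finset.sum_congr rfl fun l _ => by rw [hCrow l]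
    rw [this, hC1inv, Matrix.one_apply]
    by_cases hij : i = j
    · subst hij; simp [hj']
    · have : (⟨(i : ℕ), h⟩ : Fin n) ≠ j' := by
        simp only [hj', Ne, Fin.mk.injEq]
        exact fun hh => hij (Fin.ext hh)
      simp [this, hij]
  -- the ratio ρ
  have hj0 : 0 < ‖r (lam j)‖ := lt_of_le_of_lt (by positivity) hsep
  have hrj : r (lam j) ≠ 0 := by
    intro h0
    rw [h0] at hj0
    simp at hj0
  set ρ : ℝ := ‖r (lam ⟨n, hnN⟩)‖ / ‖r (lam j)‖ with hρ
  have hρ0 : 0 ≤ ρ := by positivity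
  have hρ1 : ρ < 1 := (div_lt_one hj0).mpr hsep
  have hratio : ∀ i : Fin N, n ≤ (i : ℕ) →
      ‖r (lam i)‖ / ‖r (lam j)‖ ≤ ρ := by
    intro i hi
    have hle : ‖r (lam i)‖ ≤ ‖r (lam ⟨n, hnN⟩)‖ :=
      hord ⟨n, hnN⟩ i (by simpa [Fin.le_def] using hi)
    exact (div_le_div_iff_of_pos_right hj0).mpr hle
  -- B-norm of X *ᵥ v is the ℓ² norm of v
  have hBn : ∀ v : Fin N → ℂ,
      Bnorm (X.mulVec v) = Real.sqrt (∑ i, Complex.normSq (v i)) := by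
    intro v
    rw [hBnorm]
    congr 1
    have h1 : star (X *ᵥ v) ⬝ᵥ B *ᵥ (X *ᵥ v) = star v ⬝ᵥ v := by
      rw [Matrix.star_mulVec, ← Matrix.dotProduct_mulVec, Matrix.mulVec_mulVec,
        Matrix.mulVec_mulVec, hX, Matrix.one_mulVec]
    rw [h1, dotProduct]
    rw [Complex.re_sum]
    refine Finset.sum_congr rfl fun i _ => ?_
    have hi : star (v i) * v i = ((Complex.normSq (v i) : ℝ) : ℂ) := by
      rw [Complex.star_def, ← Complex.normSq_eq_conj_mul_self]
    rw [Pi.star_apply, hi, Complex.ofReal_re]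
  -- columns formula for Z (k+1)
  have hWu : ∀ k, IsUnit (W (k + 1)) := by
    intro k
    rw [Matrix.isUnit_iff_isUnit_det]
    have h := congrArg Matrix.det (hW k)
    rw [Matrix.det_mul, Matrix.det_mul, Matrix.det_one] at h
    exact IsUnit.of_mul_eq_one (a := (W (k + 1)).det)
      ((W (k + 1))ᴴ.det * ((Z (k + 1))ᴴ * B * Z (k + 1)).det) (by linear_combination h)
  have hZform : ∀ k : ℕ, ∃ P : Matrix (Fin n) (Fin n) ℂ,
      IsUnit P ∧ Z (k + 1) = rM ^ (k + 1) * Y 0 * P := by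
    intro k
    induction k with
    | zero => exact ⟨1, isUnit_one, by rw [pow_one, Matrix.mul_one]; exact hZ 0⟩
    | succ k ih =>
      obtain ⟨P, hPu, hP⟩ := ih
      refine ⟨P * W (k + 1), hPu.mul (hWu k), ?_⟩
      rw [hZ (k + 1), hY k, hP]
      simp only [pow_succ', Matrix.mul_assoc, mul_assoc]
  -- the constant K
  set K : ℝ := Real.sqrt (∑ i, Complex.normSq (G i j')) with hK
  have hKnn : 0 ≤ K := Real.sqrt_nonneg _
  -- main estimate for k ≥ 1
  have main : ∀ k : ℕ,
      sInf {t : ℝ | ∃ z ∈ LinearMap.range (Z (k + 1)).mulVecLin,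
          t = Bnorm ((fun i => X i j) - z)} ≤ ρ ^ (k + 1) * K := by
    intro k
    obtain ⟨P, hPu, hP⟩ := hZform k
    set m := k + 1 with hm
    set c : Fin N → ℂ := fun i => ((r (lam j))⁻¹) ^ m * ((r (lam i)) ^ m * G i j') with hc
    set w : Fin n → ℂ := ((r (lam j))⁻¹) ^ m • (C1⁻¹ *ᵥ Pi.single j' 1) with hw
    have hPdet : IsUnit P.det := (Matrix.isUnit_iff_isUnit_det P).mp hPu
    have hz : (Z m).mulVec (P⁻¹.mulVec w) = X.mulVec c := by
      rw [Matrix.mulVec_mulVec, hP, Matrix.mul_assoc (rM ^ m * Y 0),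
        Matrix.mul_nonsing_inv P hPdet, Matrix.mul_one, hrMk m, hY0C]
      have h2 : X * D ^ m * (Xᴴ * B) * (X * C) = X * (D ^ m * C) := by
        rw [Matrix.mul_assoc (X * D ^ m), ← Matrix.mul_assoc (Xᴴ * B), hXl,
          Matrix.one_mul, Matrix.mul_assoc]
      rw [h2, ← Matrix.mulVec_mulVec]
      refine congrArg X.mulVec ?_
      rw [hw, Matrix.mulVec_smul, Matrix.mulVec_mulVec, Matrix.mul_assoc, ← hG]
      funext i
      simp only [hc, Pi.smul_apply, Matrix.mulVec_single, smul_eq_mul, mul_one, hD,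
        Matrix.diagonal_pow, Matrix.diagonal_mul, Pi.pow_apply,
          MulOpposite.op_one, one_smul, Matrix.col_apply]
    have hmem : X.mulVec c ∈ LinearMap.range (Z m).mulVecLin :=
      ⟨P⁻¹.mulVec w, by rw [Matrix.mulVecLin_apply, hz]⟩
    have hxj : (fun i => X i j) = X.mulVec (Pi.single j 1) := by
      funext i; simp [Matrix.mulVec_single]
    have hdiff : (fun i => X i j) - X.mulVec c = X.mulVec ((Pi.single j 1 : Fin N → ℂ) - c) := by
      rw [hxj, Matrix.mulVec_sub]
    have hentry : ∀ i : Fin N, Complex.normSq (((Pi.single j 1 : Fin N → ℂ) - c) i) ≤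
        (ρ ^ m) ^ 2 * Complex.normSq (G i j') := by
      intro i
      by_cases hi : (i : ℕ) < n
      · have h0 : ((Pi.single j 1 : Fin N → ℂ) - c) i = 0 := by
          by_cases hij : i = j
          · subst hij
            have hG1 : G i j' = 1 := by rw [hGtop i hi]; simp
            simp only [Pi.sub_apply, hc, hG1, Pi.single_eq_same]
            rw [mul_one, ← mul_pow, inv_mul_cancel₀ hrj, one_pow, sub_self]
          · have hG0 : G i j' = 0 := by rw [hGtop i hi]; simp [hij]
            simp [hc, hG0, Pi.single_eq_of_ne hij]
        rw [h0, map_zero]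
        have : (0:ℝ) ≤ Complex.normSq (G i j') := Complex.normSq_nonneg _
        positivity
      · have hni : n ≤ (i : ℕ) := Nat.le_of_not_lt hi
        have hij : i ≠ j := fun h => hi (h ▸ hj)
        have h0 : ((Pi.single j 1 : Fin N → ℂ) - c) i = -(c i) := by
          simp [Pi.sub_apply, Pi.single_eq_of_ne hij]
        rw [h0, Complex.normSq_neg]
        have habs : ‖c i‖ ≤ ρ ^ m * ‖G i j'‖ := by
          have hceq : ‖c i‖ =
              (‖r (lam i)‖ / ‖r (lam j)‖) ^ m *
                ‖G i j'‖ := by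
            rw [hc]
            rw [norm_mul, norm_mul, norm_pow, norm_pow, norm_inv, div_pow]
            ring
          rw [hceq]
          have h1 : (‖r (lam i)‖ / ‖r (lam j)‖) ^ m ≤ ρ ^ m :=
            pow_le_pow_left₀ (by positivity) (hratio i hni) m
          exact mul_le_mul_of_nonneg_right h1 (by positivity)
        calc Complex.normSq (c i) = (‖c i‖) ^ 2 := (Complex.sq_norm _).symm
        _ ≤ (ρ ^ m * ‖G i j'‖) ^ 2 := by
            exact pow_le_pow_left₀ (by positivity) habs 2
        _ = (ρ ^ m) ^ 2 * Complex.normSq (G i j') := by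
            rw [mul_pow, Complex.sq_norm]
    have hsum : ∑ i, Complex.normSq (((Pi.single j 1 : Fin N → ℂ) - c) i) ≤
        (ρ ^ m) ^ 2 * ∑ i, Complex.normSq (G i j') := by
      rw [Finset.mul_sum]
      exact Finset.sum_le_sum fun i _ => hentry i
    have hnorm : Bnorm ((fun i => X i j) - X.mulVec c) ≤ ρ ^ m * K := by
      rw [hdiff, hBn]
      calc Real.sqrt (∑ i, Complex.normSq (((Pi.single j 1 : Fin N → ℂ) - c) i))
          ≤ Real.sqrt ((ρ ^ m) ^ 2 * ∑ i, Complex.normSq (G i j')) :=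
            Real.sqrt_le_sqrt hsum
      _ = ρ ^ m * K := by
          rw [Real.sqrt_mul (by positivity), Real.sqrt_sq (by positivity), hK]
    have hbdd : BddBelow {t : ℝ | ∃ z ∈ LinearMap.range (Z m).mulVecLin,
        t = Bnorm ((fun i => X i j) - z)} := by
      refine ⟨0, fun t ht => ?_⟩
      obtain ⟨z, _, rfl⟩ := ht
      rw [hBnorm]
      exact Real.sqrt_nonneg _
    exact le_trans (csInf_le hbdd ⟨X.mulVec c, hmem, rfl⟩) hnorm
  -- squeeze
  have hnn : ∀ k : ℕ, 0 ≤ sInf {t : ℝ | ∃ z ∈ LinearMap.range (Z k).mulVecLin,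
      t = Bnorm ((fun i => X i j) - z)} := by
    intro k
    apply Real.sInf_nonneg
    rintro t ⟨z, _, rfl⟩
    rw [hBnorm]
    exact Real.sqrt_nonneg _
  apply squeeze_zero' (g := fun k => ρ ^ k * K) (Filter.Eventually.of_forall hnn)
  · filter_upwards [Filter.eventually_ge_atTop 1] with k hk
    obtain ⟨l, rfl⟩ := Nat.exists_eq_add_of_le hk
    rw [Nat.add_comm]
    exact main l
  · have := (tendsto_pow_atTop_nhds_zero_of_lt_one hρ0 hρ1).mul_const K
    simpa using this
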